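/- arXiv:1001.3972 — 3 statements merged into one kernel-verified Lean document; each statement's English description precedes it below -/
import Mathlib

section
/- Let λ be a σ-finite measure on a measurable space (Y, 𝒴) carrying a transitive measurable binary relation < such that at most one of y < z and z < y holds and λ([y]) = 0 for all y ∈ Y. Let n ≥ 1 and let g : Yⁿ × Y → ℝ be measurable, square-integrable with respect to λ^{n+1}, symmetric in its first n arguments, and such that g(y₁, …, yₙ, y) = 0 unless yᵢ < y for every i ∈ {1, …, n}. Define the symmetrization g̃(y₁, …, y_{n+1}) := (n+1)⁻¹ Σ_{i=1}^{n+1} g(y₁, …, y_{i−1}, y_{i+1}, …, y_{n+1}, yᵢ). Then ∫ g̃² dλ^{n+1} = (n+1)⁻¹ ∫ g² dλ^{n+1}. -/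
open MeasureTheory
open scoped ENNReal NNReal

noncomputable section

/-- computation in Proposition 2.2 of Last-Penrose: for `g` symmetric in
its first `n` arguments, square integrable, and vanishing unless each of the first `n`
arguments is below the last one, the symmetrization `g̃` satisfies
`∫ g̃² dλ^{n+1} = (n+1)⁻¹ ∫ g² dλ^{n+1}`. -/
theorem symmetrization_sq_lintegral {Y : Type*} [MeasurableSpace Y]
    (lam : Measure Y) [SigmaFinite lam]
    (lt : Y → Y → Prop) (hlt_trans : Transitive lt)
    (hlt_meas : MeasurableSet {p : Y × Y | lt p.1 p.2})
    (hlt_asymm : ∀ y z : Y, lt y z → ¬ lt z y)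
    (hlt_ae : ∀ y : Y, lam {z | ¬ lt z y ∧ ¬ lt y z} = 0)
    (n : ℕ) (hn : 1 ≤ n)
    (g : (Fin n → Y) → Y → ℝ)
    (hg_meas : Measurable fun p : (Fin n → Y) × Y => g p.1 p.2)
    (hg_L2 : ∫⁻ p, ENNReal.ofReal ((g p.1 p.2) ^ 2)
        ∂((Measure.pi fun _ : Fin n => lam).prod lam) < ⊤)
    (hg_symm : ∀ (σ : Equiv.Perm (Fin n)) (v : Fin n → Y) (y : Y), g (v ∘ σ) y = g v y)
    (hg_vanish : ∀ (v : Fin n → Y) (y : Y), (∃ i, ¬ lt (v i) y) → g v y = 0) :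
    ∫⁻ w, ENNReal.ofReal
        ((((n : ℝ) + 1)⁻¹ * ∑ i : Fin (n + 1), g (fun j => w (i.succAbove j)) (w i)) ^ 2)
        ∂(Measure.pi fun _ : Fin (n + 1) => lam)
      = ((n : ℝ≥0∞) + 1)⁻¹
        * ∫⁻ p, ENNReal.ofReal ((g p.1 p.2) ^ 2)
            ∂((Measure.pi fun _ : Fin n => lam).prod lam) := by
  set a : Fin (n+1) → (Fin (n+1) → Y) → ℝ :=
    fun i w => g (fun j => w (i.succAbove j)) (w i) with ha
  -- cross terms vanish pointwise
  have hcross : ∀ (w : Fin (n+1) → Y) (i j : Fin (n+1)), j ≠ i → a i w * a j w = 0 := by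
    intro w i j hij
    by_cases h : lt (w j) (w i)
    · have : a j w = 0 := by
        obtain ⟨k, hk⟩ := Fin.exists_succAbove_eq (Ne.symm hij)
        exact hg_vanish _ _ ⟨k, by rw [hk]; exact hlt_asymm _ _ h⟩
      rw [this, mul_zero]
    · have : a i w = 0 := by
        obtain ⟨k, hk⟩ := Fin.exists_succAbove_eq hij
        exact hg_vanish _ _ ⟨k, by rw [hk]; exact h⟩
      rw [this, zero_mul]
  have hsq : ∀ w : Fin (n+1) → Y,
      (∑ i : Fin (n+1), a i w) ^ 2 = ∑ i : Fin (n+1), (a i w) ^ 2 := by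
    intro w
    rw [sq, Finset.sum_mul_sum]
    refine Finset.sum_congr rfl fun i _ => ?_
    rw [Finset.sum_eq_single i (fun j _ hj => hcross w i j hj) (by simp), sq]
  have hmeas : ∀ i, Measurable (a i) := by
    intro i
    have hpair : Measurable fun w : Fin (n+1) → Y =>
        (((fun j => w (i.succAbove j)), w i) : (Fin n → Y) × Y) :=
      (measurable_pi_lambda _ fun j => measurable_pi_apply _).prodMk (measurable_pi_apply i)
    exact hg_meas.comp hpair
  -- rewrite integrand
  have hpt : ∀ w : Fin (n+1) → Y,
      ENNReal.ofReal ((((n : ℝ) + 1)⁻¹ * ∑ i : Fin (n+1), a i w) ^ 2)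
        = ENNReal.ofReal (((n : ℝ) + 1)⁻¹ ^ 2)
          * ∑ i : Fin (n+1), ENNReal.ofReal ((a i w) ^ 2) := by
    intro w
    rw [mul_pow, hsq, ENNReal.ofReal_mul (by positivity),
      ENNReal.ofReal_sum_of_nonneg (fun i _ => sq_nonneg _)]
  -- each term integrates to the RHS integral
  have hint : ∀ i : Fin (n+1),
      ∫⁻ w, ENNReal.ofReal ((a i w) ^ 2) ∂(Measure.pi fun _ : Fin (n+1) => lam)
        = ∫⁻ p, ENNReal.ofReal ((g p.1 p.2) ^ 2)
            ∂((Measure.pi fun _ : Fin n => lam).prod lam) := by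
    intro i
    have hmp : MeasurePreserving
        (fun w : Fin (n+1) → Y =>
          ((fun j => w (i.succAbove j), w i) : (Fin n → Y) × Y))
        (Measure.pi fun _ : Fin (n+1) => lam)
        ((Measure.pi fun _ : Fin n => lam).prod lam) := by
      have h1 := measurePreserving_piFinSuccAbove (fun _ : Fin (n+1) => lam) i
      have h2 := (Measure.measurePreserving_swap (μ := lam)
        (ν := Measure.pi fun _ : Fin n => lam))
      have := h2.comp h1
      convert this using 1
      rfl
    simpa using hmp.lintegral_comp ((hg_meas.pow_const 2).ennreal_ofReal)
  calc ∫⁻ w, ENNReal.ofReal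
        ((((n : ℝ) + 1)⁻¹ * ∑ i : Fin (n + 1), a i w) ^ 2)
        ∂(Measure.pi fun _ : Fin (n + 1) => lam)
      = ENNReal.ofReal (((n : ℝ) + 1)⁻¹ ^ 2)
          * ∑ i : Fin (n+1), ∫⁻ w, ENNReal.ofReal ((a i w) ^ 2)
              ∂(Measure.pi fun _ : Fin (n+1) => lam) := by
        simp_rw [hpt]
        rw [lintegral_const_mul _ (by
          exact Finset.measurable_sum _ fun i _ => ((hmeas i).pow_const 2).ennreal_ofReal),
          lintegral_finset_sum _ fun i _ => ((hmeas i).pow_const 2).ennreal_ofReal]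
    _ = ENNReal.ofReal (((n : ℝ) + 1)⁻¹ ^ 2) * ((n+1 : ℕ)
          * ∫⁻ p, ENNReal.ofReal ((g p.1 p.2) ^ 2)
              ∂((Measure.pi fun _ : Fin n => lam).prod lam)) := by
        simp_rw [hint]
        rw [Finset.sum_const, Finset.card_univ, Fintype.card_fin, nsmul_eq_mul]
    _ = ((n : ℝ≥0∞) + 1)⁻¹
        * ∫⁻ p, ENNReal.ofReal ((g p.1 p.2) ^ 2)
            ∂((Measure.pi fun _ : Fin n => lam).prod lam) := by
        rw [← mul_assoc]
        congr 1
        have hne : ((n : ℝ≥0∞) + 1) ≠ 0 := by simp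
        have hnt : ((n : ℝ≥0∞) + 1) ≠ ⊤ :=
          ENNReal.add_ne_top.2 ⟨ENNReal.natCast_ne_top n, ENNReal.one_ne_top⟩
        have hc : ENNReal.ofReal ((n : ℝ) + 1) = (n : ℝ≥0∞) + 1 := by
          rw [show ((n : ℝ) + 1) = ((n + 1 : ℕ) : ℝ) by push_cast; ring,
            ENNReal.ofReal_natCast]
          push_cast; ring
        have h1 : ENNReal.ofReal (((n : ℝ) + 1)⁻¹ ^ 2) = (((n : ℝ≥0∞) + 1) ^ 2)⁻¹ := by
          rw [show (((n : ℝ) + 1)⁻¹ ^ 2) = (((n : ℝ) + 1) ^ 2)⁻¹ by rw [inv_pow],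
            ENNReal.ofReal_inv_of_pos (by positivity),
            ENNReal.ofReal_pow (by positivity), hc]
        rw [h1, Nat.cast_add, Nat.cast_one, sq,
          ENNReal.mul_inv (Or.inl hne) (Or.inr hne), mul_assoc,
          ENNReal.inv_mul_cancel hne hnt, mul_one]
end
end

section
/- Let λ be a σ-finite measure on a measurable space (Y, 𝒴) carrying a transitive measurable binary relation < such that at most one of y < z and z < y holds and λ([y]) = 0 for all y ∈ Y. Then for every n ≥ 2, λⁿ-almost every tuple (y₁, …, yₙ) ∈ Yⁿ is strictly ordered after a permutation: the complement in Yⁿ of the union over all permutations σ of {1, …, n} of the sets {(y₁, …, yₙ) : y_{σ(1)} < y_{σ(2)} < ⋯ < y_{σ(n)}} is a λⁿ-null set. -/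
open MeasureTheory

noncomputable section

lemma exists_sorting_perm {n : ℕ} (r : Fin n → Fin n → Prop)
    (htrans : ∀ a b c, r a b → r b c → r a c)
    (hasymm : ∀ a b, r a b → ¬ r b a)
    (htotal : ∀ a b, a ≠ b → r a b ∨ r b a) :
    ∃ σ : Equiv.Perm (Fin n), ∀ i j : Fin n, i < j → r (σ i) (σ j) := by
  classical
  set r' : Fin n → Fin n → Prop := fun a b => a = b ∨ r a b with hr'
  haveI : IsTrans (Fin n) r' := ⟨by
    rintro a b c (rfl | hab) (rfl | hbc)
    · exact Or.inl rfl
    · exact Or.inr hbc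
    · exact Or.inr hab
    · exact Or.inr (htrans _ _ _ hab hbc)⟩
  haveI : IsAntisymm (Fin n) r' := ⟨by
    rintro a b (rfl | hab) (h | hba)
    · rfl
    · rfl
    · exact h.symm
    · exact absurd hba (hasymm _ _ hab)⟩
  haveI : IsTotal (Fin n) r' := ⟨by
    intro a b
    rcases eq_or_ne a b with rfl | hab
    · exact Or.inl (Or.inl rfl)
    · rcases htotal a b hab with h | h
      · exact Or.inl (Or.inr h)
      · exact Or.inr (Or.inr h)⟩
  set l := Finset.sort Finset.univ r' with hl
  have hlen : l.length = n := by
    simp [hl]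
  have hnd : l.Nodup := Finset.sort_nodup Finset.univ r'
  have hsorted : l.Pairwise r' := Finset.pairwise_sort Finset.univ r'
  set f : Fin n → Fin n := fun k => l.get (Fin.cast hlen.symm k) with hf
  have hinj : Function.Injective f := by
    intro a b hab
    have := (List.nodup_iff_injective_get.mp hnd) hab
    simpa [Fin.ext_iff] using this
  have hbij : Function.Bijective f := Finite.injective_iff_bijective.mp hinj
  refine ⟨Equiv.ofBijective f hbij, ?_⟩
  intro i j hij
  have h1 : r' (f i) (f j) := hsorted.rel_get_of_lt (by simpa using hij)
  have h2 : f i ≠ f j := fun h => absurd (hinj h) (ne_of_lt hij)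
  rcases h1 with h1 | h1
  · exact absurd h1 h2
  · exact h1

lemma pair_null {Y : Type*} [MeasurableSpace Y]
    (lam : Measure Y) [SigmaFinite lam]
    (lt : Y → Y → Prop)
    (hlt_meas : MeasurableSet {p : Y × Y | lt p.1 p.2})
    (hlt_ae : ∀ y : Y, lam {z | ¬ lt z y ∧ ¬ lt y z} = 0)
    (n : ℕ) (i j : Fin (n + 1)) (hij : j ≠ i) :
    (Measure.pi fun _ : Fin (n + 1) => lam)
      {v : Fin (n + 1) → Y | ¬ lt (v i) (v j) ∧ ¬ lt (v j) (v i)} = 0 := by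
  classical
  obtain ⟨j', hj'⟩ := Fin.exists_succAbove_eq hij
  set e := MeasurableEquiv.piFinSuccAbove (fun _ : Fin (n + 1) => Y) i with he
  have hmp := measurePreserving_piFinSuccAbove (fun _ : Fin (n + 1) => lam) i
  set T : Set (Y × (Fin n → Y)) :=
    {p | ¬ lt p.1 (p.2 j') ∧ ¬ lt (p.2 j') p.1} with hT
  have hTmeas : MeasurableSet T := by
    have hg : Measurable fun p : Y × (Fin n → Y) => (p.1, p.2 j') :=
      measurable_fst.prodMk ((measurable_pi_apply j').comp measurable_snd)
    have hg' : Measurable fun p : Y × (Fin n → Y) => (p.2 j', p.1) :=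
      ((measurable_pi_apply j').comp measurable_snd).prodMk measurable_fst
    have : T = (fun p : Y × (Fin n → Y) => (p.1, p.2 j')) ⁻¹'
        {q : Y × Y | lt q.1 q.2}ᶜ ∩
        (fun p : Y × (Fin n → Y) => (p.2 j', p.1)) ⁻¹' {q : Y × Y | lt q.1 q.2}ᶜ := by
      ext p; simp [hT, and_comm]
    rw [this]
    exact (hg hlt_meas.compl).inter (hg' hlt_meas.compl)
  have hpre : {v : Fin (n + 1) → Y | ¬ lt (v i) (v j) ∧ ¬ lt (v j) (v i)} = e ⁻¹' T := by
    ext v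
    simp [hT, he, MeasurableEquiv.piFinSuccAbove, Fin.insertNthEquiv, Fin.removeNth, hj']
  rw [hpre, hmp.measure_preimage hTmeas.nullMeasurableSet]
  rw [Measure.prod_apply hTmeas]
  have hzero : ∀ y : Y,
      (Measure.pi fun _ : Fin n => lam) (Prod.mk y ⁻¹' T) = 0 := by
    intro y
    set B : Set Y := {z | ¬ lt y z ∧ ¬ lt z y} with hB
    have hBmeas : MeasurableSet B := by
      have h1 : Measurable fun z : Y => (y, z) := measurable_const.prodMk measurable_id
      have h2 : Measurable fun z : Y => (z, y) := measurable_id.prodMk measurable_const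
      have : B = (fun z : Y => (y, z)) ⁻¹' {q : Y × Y | lt q.1 q.2}ᶜ ∩
          (fun z : Y => (z, y)) ⁻¹' {q : Y × Y | lt q.1 q.2}ᶜ := by
        ext z; simp [hB]
      rw [this]
      exact (h1 hlt_meas.compl).inter (h2 hlt_meas.compl)
    have hBnull : lam B = 0 := by
      have := hlt_ae y
      have hBeq : B = {z | ¬ lt z y ∧ ¬ lt y z} := by ext z; simp [hB, and_comm]
      rw [hBeq]; exact this
    have hbox : Prod.mk y ⁻¹' T =
        Set.pi Set.univ (Function.update (fun _ : Fin n => (Set.univ : Set Y)) j' B) := by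
      ext w
      simp only [Set.mem_preimage, Set.mem_pi, Set.mem_univ, forall_true_left]
      constructor
      · rintro ⟨h1, h2⟩ k
        rcases eq_or_ne k j' with rfl | hk
        · simp [hB, h1, h2, Function.update]
        · simp [Function.update, hk]
      · intro h
        have := h j'
        simp [Function.update, hB] at this
        exact ⟨this.1, this.2⟩
    rw [hbox, Measure.pi_pi]
    refine Finset.prod_eq_zero (Finset.mem_univ j') ?_
    simp [Function.update, hBnull]
  simp [hzero]

/-- if `λ([y]) = 0` for all `y`, then `λⁿ`-almost every tuple in `Yⁿ`
is strictly ordered after a permutation of its coordinates. -/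
theorem ae_strictly_ordered {Y : Type*} [MeasurableSpace Y]
    (lam : Measure Y) [SigmaFinite lam]
    (lt : Y → Y → Prop) (hlt_trans : Transitive lt)
    (hlt_meas : MeasurableSet {p : Y × Y | lt p.1 p.2})
    (hlt_asymm : ∀ y z : Y, lt y z → ¬ lt z y)
    (hlt_ae : ∀ y : Y, lam {z | ¬ lt z y ∧ ¬ lt y z} = 0) :
    ∀ n : ℕ, 2 ≤ n →
      (Measure.pi fun _ : Fin n => lam)
        ((⋃ σ : Equiv.Perm (Fin n),
          {v : Fin n → Y | ∀ i j : Fin n, i < j → lt (v (σ i)) (v (σ j))})ᶜ) = 0 := by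
  intro n hn
  obtain ⟨m, rfl⟩ : ∃ m, n = m + 1 := ⟨n - 1, by omega⟩
  set μ := Measure.pi fun _ : Fin (m + 1) => lam with hμ
  set N : Set (Fin (m + 1) → Y) :=
    ⋃ p : Fin (m + 1) × Fin (m + 1),
      {v | p.1 ≠ p.2 ∧ ¬ lt (v p.1) (v p.2) ∧ ¬ lt (v p.2) (v p.1)} with hN
  have hNnull : μ N = 0 := by
    refine measure_iUnion_null fun p => ?_
    rcases eq_or_ne p.1 p.2 with h | h
    · have : {v : Fin (m + 1) → Y |
          p.1 ≠ p.2 ∧ ¬ lt (v p.1) (v p.2) ∧ ¬ lt (v p.2) (v p.1)} = ∅ := by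
        ext v; simp [h]
      simp [this]
    · refine measure_mono_null (fun v hv => hv.2) ?_
      exact pair_null lam lt hlt_meas hlt_ae m p.1 p.2 h.symm
  refine measure_mono_null ?_ hNnull
  intro v hv
  simp only [Set.mem_compl_iff, Set.mem_iUnion, not_exists] at hv
  by_contra hvN
  simp only [hN, Set.mem_iUnion, Set.mem_setOf_eq, not_exists, Prod.forall] at hvN
  have hcomp : ∀ a b : Fin (m + 1), a ≠ b → lt (v a) (v b) ∨ lt (v b) (v a) := by
    intro a b hab
    by_contra h
    push_neg at h
    exact hvN a b ⟨hab, h.1, h.2⟩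
  obtain ⟨σ, hσ⟩ := exists_sorting_perm (fun a b => lt (v a) (v b))
    (fun a b c hab hbc => hlt_trans hab hbc)
    (fun a b hab => hlt_asymm _ _ hab)
    hcomp
  exact hv σ (fun i j hij => hσ i j hij)
end
end

section
/- Let η be a Poisson process on Y = [0,∞) × X with σ-finite intensity measure λ satisfying λ({t} × X) = 0 for all t ≥ 0. Then for every t ≥ 0 and every measurable f : N → ℝ with 𝔼 |f(η)| < ∞, the conditional expectations with respect to σ(η_t) and σ(η_{t−}) agree: 𝔼[f(η) | σ(η_t)] = 𝔼[f(η) | σ(η_{t−})] ℙ-almost surely. -/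
open MeasureTheory ProbabilityTheory
open scoped NNReal ENNReal

noncomputable section

/-- `η` is a Poisson process on `Y` with intensity measure `lam`, defined on the
probability space `(Ω, P)`: `η` is measurable, `η B` is Poisson distributed with
mean `lam B` for every measurable `B` (taking the value `∞` a.s. when `lam B = ∞`),
and the counts of pairwise disjoint sets are independent. -/
def IsPoissonProcess {Ω Y : Type*} [MeasurableSpace Ω] [MeasurableSpace Y]
    (P : Measure Ω) (lam : Measure Y) (η : Ω → Measure Y) : Prop :=
  Measurable η ∧
  (∀ B : Set Y, MeasurableSet B → lam B ≠ ⊤ → ∀ k : ℕ,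
      P {ω | η ω B = k} = ENNReal.ofReal (poissonPMFReal (lam B).toNNReal k)) ∧
  (∀ B : Set Y, MeasurableSet B → lam B = ⊤ → ∀ᵐ ω ∂P, η ω B = ⊤) ∧
  (∀ (n : ℕ) (B : Fin n → Set Y), (∀ i, MeasurableSet (B i)) →
      Pairwise (Function.onFun Disjoint B) →
      iIndepFun (fun i ω => η ω (B i)) P)

private lemma measurable_restrict_map {Y : Type*} [MeasurableSpace Y] {S : Set Y}
    (hS : MeasurableSet S) :
    Measurable fun μ : Measure Y => μ.restrict S :=
  Measure.measurable_of_measurable_coe _ fun s hs => by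
    simp_rw [Measure.restrict_apply hs]
    exact Measure.measurable_coe (hs.inter hS)

/-- If `F1 = F2` a.e. and `comap F2 ≤ comap F1` with both maps measurable, then the
conditional expectations with respect to the two comap σ-algebras agree a.e. -/
private lemma condexp_comap_congr {Ω α : Type*} {mΩ : MeasurableSpace Ω}
    {mα : MeasurableSpace α}
    (P : Measure Ω) [IsProbabilityMeasure P]
    {F1 F2 : Ω → α} (hF1 : Measurable F1) (hF2 : Measurable F2)
    (hle : MeasurableSpace.comap F2 mα ≤ MeasurableSpace.comap F1 mα)
    (heq : F1 =ᵐ[P] F2)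
    {f : Ω → ℝ} (hfi : Integrable f P) :
    P[f | MeasurableSpace.comap F1 mα] =ᵐ[P] P[f | MeasurableSpace.comap F2 mα] := by
  have hm1 : MeasurableSpace.comap F1 mα ≤ mΩ := hF1.comap_le
  have hm2 : MeasurableSpace.comap F2 mα ≤ mΩ := hF2.comap_le
  haveI : SigmaFinite (P.trim hm1) := inferInstance
  haveI : SigmaFinite (P.trim hm2) := inferInstance
  refine (ae_eq_condExp_of_forall_setIntegral_eq hm1 hfi
    (fun s _ _ => integrable_condExp.integrableOn) (fun s hs _ => ?_)
    (StronglyMeasurable.aestronglyMeasurable (stronglyMeasurable_condExp.mono hle))).symm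
  obtain ⟨B, hB, rfl⟩ := hs
  have hs' : MeasurableSet[MeasurableSpace.comap F2 mα] (F2 ⁻¹' B) := ⟨B, hB, rfl⟩
  have hset : (F1 ⁻¹' B) =ᵐ[P] (F2 ⁻¹' B) := by
    filter_upwards [heq] with ω hω
    show (F1 ω ∈ B) = (F2 ω ∈ B)
    rw [hω]
  calc ∫ x in F1 ⁻¹' B, (P[f | MeasurableSpace.comap F2 mα]) x ∂P
      = ∫ x in F2 ⁻¹' B, (P[f | MeasurableSpace.comap F2 mα]) x ∂P :=
        setIntegral_congr_set hset
    _ = ∫ x in F2 ⁻¹' B, f x ∂P := setIntegral_condExp hm2 hfi hs'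
    _ = ∫ x in F1 ⁻¹' B, f x ∂P := (setIntegral_congr_set hset).symm

/-- observation in the proof of Theorem 3.1 of Last-Penrose: since
`λ({t} × X) = 0`, conditioning on `η_t` (restriction to `[0,t] × X`) and on `η_{t-}`
(restriction to `[0,t) × X`) give the same conditional expectation. -/
theorem condexp_restrict_le_eq_condexp_restrict_lt
    {Ω X : Type*} [MeasurableSpace Ω] [MeasurableSpace X]
    (P : Measure Ω) [IsProbabilityMeasure P]
    (lam : Measure (ℝ≥0 × X)) [SigmaFinite lam]
    (hdiff : ∀ t : ℝ≥0, lam ({t} ×ˢ (Set.univ : Set X)) = 0)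
    (η : Ω → Measure (ℝ≥0 × X)) (hη : IsPoissonProcess P lam η) :
    ∀ t : ℝ≥0, ∀ f : Measure (ℝ≥0 × X) → ℝ, Measurable f →
      Integrable (fun ω => f (η ω)) P →
      ∀ᵐ ω ∂P,
        (P[fun ω' => f (η ω') |
            MeasurableSpace.comap (fun ω' => (η ω').restrict {p | p.1 ≤ t}) inferInstance]) ω
        = (P[fun ω' => f (η ω') |
            MeasurableSpace.comap (fun ω' => (η ω').restrict {p | p.1 < t}) inferInstance]) ω := by
  obtain ⟨hηm, hpois, -, -⟩ := hη
  intro t f hf hfi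
  have hSle : MeasurableSet {p : ℝ≥0 × X | p.1 ≤ t} :=
    measurableSet_le measurable_fst measurable_const
  have hSlt : MeasurableSet {p : ℝ≥0 × X | p.1 < t} :=
    measurableSet_lt measurable_fst measurable_const
  have hF1 : Measurable fun ω => (η ω).restrict {p : ℝ≥0 × X | p.1 ≤ t} :=
    (measurable_restrict_map hSle).comp hηm
  have hF2 : Measurable fun ω => (η ω).restrict {p : ℝ≥0 × X | p.1 < t} :=
    (measurable_restrict_map hSlt).comp hηm
  -- comap of the `<`-restriction is contained in comap of the `≤`-restriction
  have hfactor : (fun ω => (η ω).restrict {p : ℝ≥0 × X | p.1 < t})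
      = (fun μ : Measure (ℝ≥0 × X) => μ.restrict {p | p.1 < t}) ∘
        (fun ω => (η ω).restrict {p | p.1 ≤ t}) := by
    have hinter : ({p : ℝ≥0 × X | p.1 < t} ∩ {p : ℝ≥0 × X | p.1 ≤ t})
        = {p : ℝ≥0 × X | p.1 < t} :=
      Set.inter_eq_left.2 fun p (hp : p.1 < t) => show p.1 ≤ t from hp.le
    funext ω
    simp only [Function.comp_apply, Measure.restrict_restrict hSlt, hinter]
  have hle : MeasurableSpace.comap (fun ω => (η ω).restrict {p : ℝ≥0 × X | p.1 < t})
        inferInstance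
      ≤ MeasurableSpace.comap (fun ω => (η ω).restrict {p : ℝ≥0 × X | p.1 ≤ t})
        inferInstance := by
    rw [hfactor, ← MeasurableSpace.comap_comp]
    exact MeasurableSpace.comap_mono (measurable_restrict_map hSlt).comap_le
  -- a.e. the two restrictions agree
  have hBmeas : MeasurableSet ({t} ×ˢ (Set.univ : Set X)) :=
    (measurableSet_singleton t).prod MeasurableSet.univ
  have hzero : ∀ᵐ ω ∂P, η ω ({t} ×ˢ (Set.univ : Set X)) = 0 := by
    have h := hpois _ hBmeas (by rw [hdiff t]; exact ENNReal.zero_ne_top) 0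
    rw [hdiff t] at h
    have h1 : P {ω | η ω ({t} ×ˢ (Set.univ : Set X)) = ((0 : ℕ) : ℝ≥0∞)} = 1 := by
      rw [h]
      simp [poissonPMFReal]
    have hsm : MeasurableSet {ω | η ω ({t} ×ˢ (Set.univ : Set X)) = ((0 : ℕ) : ℝ≥0∞)} :=
      ((Measure.measurable_coe hBmeas).comp hηm) (measurableSet_singleton _)
    have hc : P {ω | η ω ({t} ×ˢ (Set.univ : Set X)) = ((0 : ℕ) : ℝ≥0∞)}ᶜ = 0 := by
      rw [measure_compl hsm (measure_ne_top _ _), h1, measure_univ, tsub_self]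
    have : ∀ᵐ ω ∂P, η ω ({t} ×ˢ (Set.univ : Set X)) = ((0 : ℕ) : ℝ≥0∞) := by
      rw [MeasureTheory.ae_iff, ← Set.compl_setOf]
      exact hc
    simpa using this
  have heqF : (fun ω => (η ω).restrict {p : ℝ≥0 × X | p.1 ≤ t})
      =ᵐ[P] (fun ω => (η ω).restrict {p : ℝ≥0 × X | p.1 < t}) := by
    filter_upwards [hzero] with ω hω
    refine Measure.restrict_congr_set (MeasureTheory.ae_eq_set.2 ⟨?_, ?_⟩)
    · refine measure_mono_null (fun p hp => ?_) hω
      obtain ⟨hp1, hp2⟩ := hp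
      exact ⟨le_antisymm hp1 (not_lt.1 hp2), Set.mem_univ p.2⟩
    · have : {p : ℝ≥0 × X | p.1 < t} \ {p | p.1 ≤ t} = ∅ := by
        ext p
        simp only [Set.mem_diff, Set.mem_setOf_eq, Set.mem_empty_iff_false, iff_false]
        exact fun h => h.2 h.1.le
      rw [this, measure_empty]
  exact condexp_comap_congr P hF1 hF2 hle heqF hfi
end
end
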